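/- Let τ, γ, λ > 0, U ∈ ℝ^{p×n}, V ∈ ℝ^{p×m}, and define Ψ(W) := (τ/2)‖U − VW‖² + (γ/2)‖W‖² for W ∈ ℝ^{m×n}. Suppose W* ∈ ℝ^{m×n} is a P-stationary point for some β > 0, i.e., W* ∈ Prox_{βλ‖·‖_{0,2}}(W* − β∇Ψ(W*)). Then W* is the unique minimizer of Ψ(W) + λ‖W‖_{0,2} on the neighborhood {W : ‖W − W*‖ < √(βλ/(2m²))}; in particular, Ψ(W) + λ‖W‖_{0,2} > Ψ(W*) + λ‖W*‖_{0,2} for every W ≠ W* in that neighborhood. -/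

import Mathlib

set_option autoImplicit false

open Matrix

/-- Squared Frobenius norm of a matrix. -/
noncomputable def frobSq {m n : ℕ} (W : Matrix (Fin m) (Fin n) ℝ) : ℝ :=
  ∑ i, ∑ j, (W i j) ^ 2

/-- Frobenius norm of a matrix. -/
noncomputable def frobNorm {m n : ℕ} (W : Matrix (Fin m) (Fin n) ℝ) : ℝ :=
  Real.sqrt (frobSq W)

open Classical in
/-- `‖W‖_{0,2}`: the number of nonzero rows of `W`, as a real number. -/
noncomputable def norm02 {m n : ℕ} (W : Matrix (Fin m) (Fin n) ℝ) : ℝ :=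
  ((Finset.univ.filter fun s : Fin m => W s ≠ 0).card : ℝ)

/-- The proximal operator (as a set of global minimizers):
`Prox_β G (H) = argmin_W { G(W) + (1/(2β))‖W − H‖² }`. -/
def ProxSet {m n : ℕ} (β : ℝ) (G : Matrix (Fin m) (Fin n) ℝ → ℝ)
    (H : Matrix (Fin m) (Fin n) ℝ) : Set (Matrix (Fin m) (Fin n) ℝ) :=
  {W | ∀ Z : Matrix (Fin m) (Fin n) ℝ,
    G W + (1 / (2 * β)) * frobSq (W - H) ≤ G Z + (1 / (2 * β)) * frobSq (Z - H)}

/-- The objective `Ψ(W) = (τ/2)‖U − VW‖² + (γ/2)‖W‖²`. -/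
noncomputable def Psi {p m n : ℕ} (τ γ : ℝ) (U : Matrix (Fin p) (Fin n) ℝ)
    (V : Matrix (Fin p) (Fin m) ℝ) (W : Matrix (Fin m) (Fin n) ℝ) : ℝ :=
  (τ / 2) * frobSq (U - V * W) + (γ / 2) * frobSq W

/-- The gradient of `Ψ`, namely `∇Ψ(W) = τ Vᵀ(VW − U) + γ W`. -/
noncomputable def gradPsi {p m n : ℕ} (τ γ : ℝ) (U : Matrix (Fin p) (Fin n) ℝ)
    (V : Matrix (Fin p) (Fin m) ℝ) (W : Matrix (Fin m) (Fin n) ℝ) :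
    Matrix (Fin m) (Fin n) ℝ :=
  τ • (Vᵀ * (V * W - U)) + γ • W

noncomputable def rowSq {n : ℕ} (v : Fin n → ℝ) : ℝ := ∑ j, v j ^ 2

noncomputable def finner {m n : ℕ} (A B : Matrix (Fin m) (Fin n) ℝ) : ℝ :=
  ∑ i, ∑ j, A i j * B i j

lemma rowSq_nonneg {n : ℕ} (v : Fin n → ℝ) : 0 ≤ rowSq v :=
  Finset.sum_nonneg fun _ _ => sq_nonneg _

lemma rowSq_eq_zero_iff {n : ℕ} (v : Fin n → ℝ) : rowSq v = 0 ↔ v = 0 := by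
  constructor
  · intro h
    funext j
    have := (Finset.sum_eq_zero_iff_of_nonneg (fun j _ => sq_nonneg (v j))).1 h j
      (Finset.mem_univ j)
    exact pow_eq_zero_iff (two_ne_zero) |>.1 this
  · rintro rfl; simp [rowSq]

lemma rowSq_smul {n : ℕ} (c : ℝ) (v : Fin n → ℝ) : rowSq (c • v) = c ^ 2 * rowSq v := by
  simp [rowSq, mul_pow, Finset.mul_sum]

lemma rowSq_neg {n : ℕ} (v : Fin n → ℝ) : rowSq (-v) = rowSq v := by
  simp [rowSq]

lemma frobSq_eq_rowSq {m n : ℕ} (W : Matrix (Fin m) (Fin n) ℝ) :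
    frobSq W = ∑ i, rowSq (W i) := rfl

lemma frobSq_nonneg {m n : ℕ} (W : Matrix (Fin m) (Fin n) ℝ) : 0 ≤ frobSq W :=
  Finset.sum_nonneg fun _ _ => rowSq_nonneg _

lemma frobSq_pos {m n : ℕ} (W : Matrix (Fin m) (Fin n) ℝ) (h : W ≠ 0) : 0 < frobSq W := by
  rcases (frobSq_nonneg W).lt_or_eq with h1 | h1
  · exact h1
  · exfalso
    apply h
    ext i j
    have h0 := h1.symm
    rw [frobSq_eq_rowSq] at h0
    have := (Finset.sum_eq_zero_iff_of_nonneg (fun i _ => rowSq_nonneg (W i))).1 h0 i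
      (Finset.mem_univ i)
    have := (rowSq_eq_zero_iff (W i)).1 this
    simpa using congrFun this j

lemma rowSq_le_frobSq {m n : ℕ} (W : Matrix (Fin m) (Fin n) ℝ) (i : Fin m) :
    rowSq (W i) ≤ frobSq W := by
  rw [frobSq_eq_rowSq]
  exact Finset.single_le_sum (fun i _ => rowSq_nonneg (W i)) (Finset.mem_univ i)

lemma frobSq_add {m n : ℕ} (A B : Matrix (Fin m) (Fin n) ℝ) :
    frobSq (A + B) = frobSq A + 2 * finner A B + frobSq B := by
  simp only [frobSq, finner, Matrix.add_apply]
  rw [Finset.mul_sum, ← Finset.sum_add_distrib, ← Finset.sum_add_distrib]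
  refine Finset.sum_congr rfl fun i _ => ?_
  rw [Finset.mul_sum, ← Finset.sum_add_distrib, ← Finset.sum_add_distrib]
  exact Finset.sum_congr rfl fun j _ => by ring

lemma finner_mul {p m n : ℕ} (X : Matrix (Fin p) (Fin n) ℝ) (V : Matrix (Fin p) (Fin m) ℝ)
    (D : Matrix (Fin m) (Fin n) ℝ) : finner X (V * D) = finner (Vᵀ * X) D := by
  simp only [finner, Matrix.mul_apply, Matrix.transpose_apply, Finset.mul_sum, Finset.sum_mul]
  calc (∑ i, ∑ j, ∑ k, X i j * (V i k * D k j))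
      = ∑ i, ∑ k, ∑ j, X i j * (V i k * D k j) :=
        Finset.sum_congr rfl fun i _ => Finset.sum_comm
    _ = ∑ k, ∑ i, ∑ j, X i j * (V i k * D k j) := Finset.sum_comm
    _ = ∑ k, ∑ j, ∑ i, V i k * X i j * D k j :=
        Finset.sum_congr rfl fun k _ => Finset.sum_comm.trans
          (Finset.sum_congr rfl fun j _ => Finset.sum_congr rfl fun i _ => by ring)

lemma finner_add_left {m n : ℕ} (A B C : Matrix (Fin m) (Fin n) ℝ) :
    finner (A + B) C = finner A C + finner B C := by
  simp only [finner, Matrix.add_apply, add_mul, Finset.sum_add_distrib]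

lemma finner_smul_left {m n : ℕ} (c : ℝ) (A B : Matrix (Fin m) (Fin n) ℝ) :
    finner (c • A) B = c * finner A B := by
  simp only [finner, Matrix.smul_apply, smul_eq_mul, Finset.mul_sum, mul_assoc]

lemma finner_neg_right {m n : ℕ} (A B : Matrix (Fin m) (Fin n) ℝ) :
    finner A (-B) = -finner A B := by
  simp [finner, Finset.sum_neg_distrib]

lemma finner_sub_symm {m n : ℕ} (A B C : Matrix (Fin m) (Fin n) ℝ) :
    finner (A - B) C = -finner (B - A) C := by
  simp only [finner]
  rw [← Finset.sum_neg_distrib]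
  refine Finset.sum_congr rfl fun i _ => ?_
  rw [← Finset.sum_neg_distrib]
  refine Finset.sum_congr rfl fun j _ => ?_
  simp [Matrix.sub_apply]; ring

lemma frobSq_updateRow {m n : ℕ} (A : Matrix (Fin m) (Fin n) ℝ) (i : Fin m) (v : Fin n → ℝ) :
    frobSq (A.updateRow i v) = frobSq A - rowSq (A i) + rowSq v := by
  have h1 : frobSq (A.updateRow i v) = rowSq v + ∑ s ∈ Finset.univ.erase i, rowSq (A s) := by
    rw [frobSq_eq_rowSq, ← Finset.add_sum_erase _ _ (Finset.mem_univ i)]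
    congr 1
    · rw [Matrix.updateRow_self]
    · exact Finset.sum_congr rfl fun s hs => by
        rw [Matrix.updateRow_ne (Finset.ne_of_mem_erase hs)]
  have h2 : frobSq A = rowSq (A i) + ∑ s ∈ Finset.univ.erase i, rowSq (A s) := by
    rw [frobSq_eq_rowSq, ← Finset.add_sum_erase _ _ (Finset.mem_univ i)]
  rw [h1, h2]; ring

lemma norm02_updateRow_ne {m n : ℕ} (A : Matrix (Fin m) (Fin n) ℝ) (i : Fin m)
    (v : Fin n → ℝ) (hv : v ≠ 0) (hA : A i ≠ 0) :
    norm02 (A.updateRow i v) = norm02 A := by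
  unfold norm02
  congr 2
  ext s
  by_cases hs : s = i
  · subst hs; simp [Matrix.updateRow_self, hv, hA]
  · simp [Matrix.updateRow_ne hs]

open Classical in
lemma norm02_updateRow_zero {m n : ℕ} (A : Matrix (Fin m) (Fin n) ℝ) (i : Fin m)
    (hA : A i ≠ 0) :
    norm02 (A.updateRow i (0 : Fin n → ℝ)) = norm02 A - 1 := by
  unfold norm02
  have hset : (Finset.univ.filter fun s : Fin m => A.updateRow i 0 s ≠ 0)
      = (Finset.univ.filter fun s : Fin m => A s ≠ 0).erase i := by
    ext s
    by_cases hs : s = i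
    · subst hs; simp [Matrix.updateRow_self]
    · simp [Matrix.updateRow_ne hs, hs, Finset.mem_erase]
  have hmem : i ∈ (Finset.univ.filter fun s : Fin m => A s ≠ 0) := by simp [hA]
  rw [hset, Finset.card_erase_of_mem hmem]
  have hpos : 1 ≤ (Finset.univ.filter fun s : Fin m => A s ≠ 0).card :=
    Finset.card_pos.2 ⟨i, hmem⟩
  push_cast [Nat.cast_sub hpos]
  ring

open Classical in
lemma norm02_updateRow_le {m n : ℕ} (A : Matrix (Fin m) (Fin n) ℝ) (i : Fin m)
    (v : Fin n → ℝ) :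
    norm02 (A.updateRow i v) ≤ norm02 A + 1 := by
  unfold norm02
  have hsub : (Finset.univ.filter fun s : Fin m => A.updateRow i v s ≠ 0)
      ⊆ insert i (Finset.univ.filter fun s : Fin m => A s ≠ 0) := by
    intro s hs
    by_cases h : s = i
    · simp [h]
    · simp only [Finset.mem_filter, Finset.mem_univ, true_and] at hs
      rw [Matrix.updateRow_ne h] at hs
      simp [Finset.mem_insert, hs]
  have := Finset.card_le_card hsub
  have h2 := Finset.card_insert_le i (Finset.univ.filter fun s : Fin m => A s ≠ 0)
  have : (Finset.univ.filter fun s : Fin m => A.updateRow i v s ≠ 0).card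
      ≤ (Finset.univ.filter fun s : Fin m => A s ≠ 0).card + 1 := le_trans this h2
  exact_mod_cast this

lemma updateRow_sub {m n : ℕ} (A B : Matrix (Fin m) (Fin n) ℝ) (i : Fin m)
    (v : Fin n → ℝ) :
    A.updateRow i v - B = (A - B).updateRow i (v - B i) := by
  ext s j
  by_cases hs : s = i
  · subst hs
    simp [Matrix.updateRow_self, Matrix.sub_apply]
  · simp [Matrix.updateRow_ne hs, Matrix.sub_apply]

section ProxFacts

variable {p m n : ℕ} {τ γ lam β : ℝ}
  {U : Matrix (Fin p) (Fin n) ℝ} {V : Matrix (Fin p) (Fin m) ℝ}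
  {Wstar : Matrix (Fin m) (Fin n) ℝ}

lemma prox_key (hβ : 0 < β)
    (hP : Wstar ∈ ProxSet β (fun W => lam * norm02 W)
      (Wstar - β • gradPsi τ γ U V Wstar))
    (i : Fin m) (v : Fin n → ℝ) :
    lam * norm02 Wstar ≤ lam * norm02 (Wstar.updateRow i v)
      + (1 / (2 * β)) * (rowSq (v - Wstar i + β • (gradPsi τ γ U V Wstar i))
        - rowSq (β • (gradPsi τ γ U V Wstar i))) := by
  set G := gradPsi τ γ U V Wstar with hG
  set H := Wstar - β • G with hH
  have key := hP (Wstar.updateRow i v)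
  have h1 : Wstar - H = β • G := by rw [hH]; exact sub_sub_cancel _ _
  have hrow : (β • G) i = β • (G i) := rfl
  have hHi : H i = Wstar i - β • (G i) := rfl
  have hZH : Wstar.updateRow i v - H = (β • G).updateRow i (v - H i) := by
    rw [updateRow_sub, h1]
  have hvHi : v - H i = v - Wstar i + β • (G i) := by
    rw [hHi]; funext j; simp [Pi.sub_apply, Pi.add_apply]; ring
  have hfz : frobSq (Wstar.updateRow i v - H)
      = frobSq (β • G) - rowSq (β • (G i)) + rowSq (v - Wstar i + β • (G i)) := by
    rw [hZH, frobSq_updateRow, hrow, hvHi]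
  rw [h1] at key
  rw [hfz] at key
  have hc : (0 : ℝ) < 1 / (2 * β) := by positivity
  nlinarith [key]

lemma grad_row_zero (hβ : 0 < β) (hlam : 0 < lam)
    (hP : Wstar ∈ ProxSet β (fun W => lam * norm02 W)
      (Wstar - β • gradPsi τ γ U V Wstar))
    (i : Fin m) (hWi : Wstar i ≠ 0) : gradPsi τ γ U V Wstar i = 0 := by
  set G := gradPsi τ γ U V Wstar with hG
  by_contra hne
  set g := rowSq (G i) with hg
  have hgpos : 0 < g := by
    rcases (rowSq_nonneg (G i)).lt_or_eq with h | h
    · exact h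
    · exact absurd ((rowSq_eq_zero_iff (G i)).1 h.symm) hne
  obtain ⟨t, ht0, ht1, hvne⟩ :
      ∃ t : ℝ, 0 < t ∧ t < 1 ∧ Wstar i - (t * β) • G i ≠ 0 := by
    by_cases h2 : Wstar i - ((1/2 : ℝ) * β) • G i ≠ 0
    · exact ⟨1/2, by norm_num, by norm_num, h2⟩
    · push_neg at h2
      refine ⟨1/3, by norm_num, by norm_num, ?_⟩
      have heq : Wstar i = ((1/2 : ℝ) * β) • G i := by
        have := sub_eq_zero.1 h2; exact this
      rw [heq, ← sub_smul]
      have hc : (1/2 : ℝ) * β - (1/3 : ℝ) * β ≠ 0 := by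
        have : (1/2 : ℝ) * β - (1/3 : ℝ) * β = β / 6 := by ring
        rw [this]; positivity
      exact smul_ne_zero hc hne
  have key := prox_key hβ hP i (Wstar i - (t * β) • G i)
  rw [norm02_updateRow_ne _ _ _ hvne hWi] at key
  have hv : Wstar i - (t * β) • G i - Wstar i + β • (G i) = ((1 - t) * β) • G i := by
    funext j; simp [Pi.sub_apply, Pi.add_apply]; ring
  rw [hv, rowSq_smul, rowSq_smul] at key
  rw [← hG] at key
  have hc : (0 : ℝ) < 1 / (2 * β) := by positivity
  have hineq : 0 ≤ 1 / (2 * β) * (((1 - t) * β) ^ 2 * g - β ^ 2 * g) := by linarith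
  nlinarith [hineq, mul_pos (mul_pos hc hgpos) (mul_pos hβ hβ),
    mul_pos ht0 (show (0:ℝ) < 2 - t by linarith)]

lemma grad_row_small (hβ : 0 < β) (hlam : 0 < lam)
    (hP : Wstar ∈ ProxSet β (fun W => lam * norm02 W)
      (Wstar - β • gradPsi τ γ U V Wstar))
    (i : Fin m) (hWi : Wstar i = 0) :
    β * rowSq (gradPsi τ γ U V Wstar i) ≤ 2 * lam := by
  set G := gradPsi τ γ U V Wstar with hG
  have key := prox_key hβ hP i (-(β • (G i)))
  have hv : -(β • (G i)) - Wstar i + β • (G i) = 0 := by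
    rw [hWi]; funext j; simp
  rw [hv] at key
  have h0 : rowSq (0 : Fin n → ℝ) = 0 := by simp [rowSq]
  rw [h0, rowSq_smul] at key
  have hle := norm02_updateRow_le Wstar i (-(β • (G i)))
  have hmul : lam * norm02 (Wstar.updateRow i (-(β • (G i)))) ≤ lam * (norm02 Wstar + 1) :=
    mul_le_mul_of_nonneg_left hle hlam.le
  have hc : (1 / (2 * β)) * (β ^ 2 * rowSq (G i)) = β * rowSq (G i) / 2 := by
    field_simp
  nlinarith [key, hmul]

lemma wstar_row_big (hβ : 0 < β) (hlam : 0 < lam)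
    (hP : Wstar ∈ ProxSet β (fun W => lam * norm02 W)
      (Wstar - β • gradPsi τ γ U V Wstar))
    (i : Fin m) (hWi : Wstar i ≠ 0) :
    2 * β * lam ≤ rowSq (Wstar i) := by
  have hGz : gradPsi τ γ U V Wstar i = 0 := grad_row_zero hβ hlam hP i hWi
  have key := prox_key hβ hP i (0 : Fin n → ℝ)
  rw [hGz] at key
  have hv : (0 : Fin n → ℝ) - Wstar i + β • (0 : Fin n → ℝ) = -(Wstar i) := by
    funext j; simp
  rw [hv, rowSq_neg] at key
  have h0 : rowSq (β • (0 : Fin n → ℝ)) = 0 := by simp [rowSq]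
  rw [h0] at key
  rw [norm02_updateRow_zero _ _ hWi] at key
  have hc : (0 : ℝ) < 1 / (2 * β) := by positivity
  have hb : (1 / (2 * β)) * rowSq (Wstar i) = rowSq (Wstar i) / (2 * β) := by ring
  have h2 : lam ≤ (1 / (2 * β)) * rowSq (Wstar i) := by nlinarith [key]
  rw [hb, le_div_iff₀ (by positivity)] at h2
  nlinarith [h2]

end ProxFacts

lemma frobSq_neg {m n : ℕ} (A : Matrix (Fin m) (Fin n) ℝ) : frobSq (-A) = frobSq A := by
  simp [frobSq]

lemma finner_neg_left {m n : ℕ} (A B : Matrix (Fin m) (Fin n) ℝ) :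
    finner (-A) B = -finner A B := by
  simp [finner, Finset.sum_neg_distrib]

lemma psi_expand {p m n : ℕ} (τ γ : ℝ) (U : Matrix (Fin p) (Fin n) ℝ)
    (V : Matrix (Fin p) (Fin m) ℝ) (Wstar D : Matrix (Fin m) (Fin n) ℝ) :
    Psi τ γ U V (Wstar + D) = Psi τ γ U V Wstar + finner (gradPsi τ γ U V Wstar) D
      + (τ / 2) * frobSq (V * D) + (γ / 2) * frobSq D := by
  have hA : U - V * (Wstar + D) = (U - V * Wstar) + (-(V * D)) := by
    rw [Matrix.mul_add]; abel
  have h1 : frobSq (U - V * (Wstar + D))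
      = frobSq (U - V * Wstar) - 2 * finner (U - V * Wstar) (V * D) + frobSq (V * D) := by
    rw [hA, frobSq_add, finner_neg_right, frobSq_neg]; ring
  have h2 : finner (U - V * Wstar) (V * D) = - finner (Vᵀ * (V * Wstar - U)) D := by
    rw [show U - V * Wstar = -(V * Wstar - U) from (neg_sub _ _).symm,
      finner_neg_left, finner_mul]
  have h3 : frobSq (Wstar + D) = frobSq Wstar + 2 * finner Wstar D + frobSq D :=
    frobSq_add _ _
  have h4 : finner (gradPsi τ γ U V Wstar) D
      = τ * finner (Vᵀ * (V * Wstar - U)) D + γ * finner Wstar D := by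
    rw [gradPsi, finner_add_left, finner_smul_left, finner_smul_left]
  simp only [Psi]
  rw [h1, h2, h3, h4]; ring

open Classical in
lemma core_ineq
    (p m n : ℕ) (τ γ lam β : ℝ) (hτ : 0 < τ) (hγ : 0 < γ) (hlam : 0 < lam)
    (hβ : 0 < β)
    (U : Matrix (Fin p) (Fin n) ℝ) (V : Matrix (Fin p) (Fin m) ℝ)
    (Wstar : Matrix (Fin m) (Fin n) ℝ)
    (hP : Wstar ∈ ProxSet β (fun W => lam * norm02 W)
        (Wstar - β • gradPsi τ γ U V Wstar))
    (W : Matrix (Fin m) (Fin n) ℝ)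
    (hW : frobNorm (W - Wstar) < Real.sqrt (β * lam / (2 * (m : ℝ) ^ 2))) :
    Psi τ γ U V Wstar + lam * norm02 Wstar + (γ / 2) * frobSq (W - Wstar)
      ≤ Psi τ γ U V W + lam * norm02 W := by
  rcases Nat.eq_zero_or_pos m with hm0 | hm
  · exfalso
    subst hm0
    simp only [Nat.cast_zero] at hW
    norm_num [frobNorm] at hW
    exact absurd hW (not_lt.2 (Real.sqrt_nonneg _))
  have hm1 : (1 : ℝ) ≤ (m : ℝ) := by exact_mod_cast hm
  set D := W - Wstar with hD
  have hWD : W = Wstar + D := by rw [hD]; abel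
  set G := gradPsi τ γ U V Wstar with hG
  have hrad : frobSq D < β * lam / (2 * (m : ℝ) ^ 2) := by
    by_contra h
    push_neg at h
    have := Real.sqrt_le_sqrt h
    rw [frobNorm] at hW
    exact absurd hW (not_lt.2 this)
  have hradle : β * lam / (2 * (m : ℝ) ^ 2) ≤ β * lam / 2 := by
    have h2 : (2 : ℝ) ≤ 2 * (m : ℝ) ^ 2 := by nlinarith
    exact div_le_div_of_nonneg_left (by positivity) (by norm_num) h2
  have hsupp : ∀ i, Wstar i ≠ 0 → W i ≠ 0 := by
    intro i h0 hcontra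
    have hDi : D i = -(Wstar i) := by
      show W i - Wstar i = -(Wstar i)
      rw [hcontra]; funext j; simp
    have h1 : rowSq (D i) = rowSq (Wstar i) := by rw [hDi, rowSq_neg]
    have h2 : 2 * β * lam ≤ rowSq (Wstar i) := wstar_row_big hβ hlam hP i h0
    have h3 : rowSq (D i) ≤ frobSq D := rowSq_le_frobSq D i
    nlinarith
  set SW := Finset.univ.filter fun s : Fin m => W s ≠ 0 with hSW
  set SWs := Finset.univ.filter fun s : Fin m => Wstar s ≠ 0 with hSWs
  have hsub : SWs ⊆ SW := by
    intro i hi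
    simp only [hSWs, hSW, Finset.mem_filter, Finset.mem_univ, true_and] at hi ⊢
    exact hsupp i hi
  have hcard : norm02 W - norm02 Wstar = ((SW \ SWs).card : ℝ) := by
    rw [Finset.card_sdiff_of_subset hsub, Nat.cast_sub (Finset.card_le_card hsub)]
    rfl
  have hindic : ((SW \ SWs).card : ℝ) * lam = ∑ i, (if i ∈ SW \ SWs then lam else 0) := by
    rw [Finset.sum_ite_mem, Finset.univ_inter, Finset.sum_const, nsmul_eq_mul]
  have hkey : 0 ≤ finner G D + lam * (norm02 W - norm02 Wstar) := by
    rw [hcard, mul_comm, hindic, finner, ← Finset.sum_add_distrib]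
    apply Finset.sum_nonneg
    intro i _
    by_cases h0 : Wstar i = 0
    · by_cases h1 : W i = 0
      · have hDij : ∀ j, D i j = 0 := by
          intro j
          show W i j - Wstar i j = 0
          rw [congrFun h1 j, congrFun h0 j]; ring
        have hmem : i ∉ SW \ SWs := by
          simp [hSW, Finset.mem_sdiff, h1]
        simp [hmem, hDij]
      · have hmem : i ∈ SW \ SWs := by
          simp [hSW, hSWs, Finset.mem_sdiff, h0, h1]
        rw [if_pos hmem]
        have hcs := Finset.sum_mul_sq_le_sq_mul_sq Finset.univ (G i) (D i)
        have ha : β * rowSq (G i) ≤ 2 * lam := grad_row_small hβ hlam hP i h0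
        have hb : rowSq (D i) ≤ frobSq D := rowSq_le_frobSq D i
        have han : 0 ≤ rowSq (G i) := rowSq_nonneg _
        have hbn : 0 ≤ rowSq (D i) := rowSq_nonneg _
        have hb2 : 2 * rowSq (D i) ≤ β * lam := by
          have : frobSq D < β * lam / 2 := lt_of_lt_of_le hrad hradle
          linarith
        have hprod : rowSq (G i) * rowSq (D i) ≤ lam ^ 2 := by nlinarith
        have hcs' : (∑ j, G i j * D i j) ^ 2 ≤ lam ^ 2 := by
          calc (∑ j, G i j * D i j) ^ 2 ≤ rowSq (G i) * rowSq (D i) := hcs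
            _ ≤ lam ^ 2 := hprod
        nlinarith [sq_nonneg ((∑ j, G i j * D i j) + lam)]
    · have hGz : G i = 0 := grad_row_zero hβ hlam hP i h0
      have hGij : ∀ j, G i j = 0 := fun j => congrFun hGz j
      have hpos : 0 ≤ (if i ∈ SW \ SWs then lam else 0) := by
        split
        · exact hlam.le
        · exact le_rfl
      have hzero : (∑ j, G i j * D i j) = 0 :=
        Finset.sum_eq_zero fun j _ => by rw [hGij j, zero_mul]
      rw [hzero, zero_add]
      exact hpos
  have hexp : Psi τ γ U V W = Psi τ γ U V Wstar + finner G D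
      + (τ / 2) * frobSq (V * D) + (γ / 2) * frobSq D := by
    rw [hWD]; exact psi_expand τ γ U V Wstar D
  have hVD : 0 ≤ (τ / 2) * frobSq (V * D) :=
    mul_nonneg (by positivity) (frobSq_nonneg _)
  rw [mul_sub] at hkey
  rw [hexp]
  linarith [hkey]

/-- if `W*` is a P-stationary point of `Ψ(W) + λ‖W‖_{0,2}` for some
`β > 0`, then `W*` is the unique minimizer of `Ψ + λ‖·‖_{0,2}` on the neighborhood
`{W : ‖W − W*‖ < √(βλ/(2m²))}`: every other point of the neighborhood has a strictly
larger objective value. -/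
theorem pStationary_unique_local_minimizer
    (p m n : ℕ) (τ γ lam β : ℝ) (hτ : 0 < τ) (hγ : 0 < γ) (hlam : 0 < lam)
    (hβ : 0 < β)
    (U : Matrix (Fin p) (Fin n) ℝ) (V : Matrix (Fin p) (Fin m) ℝ)
    (Wstar : Matrix (Fin m) (Fin n) ℝ)
    (hP : Wstar ∈ ProxSet β (fun W => lam * norm02 W)
        (Wstar - β • gradPsi τ γ U V Wstar)) :
    (∀ W : Matrix (Fin m) (Fin n) ℝ,
      frobNorm (W - Wstar) < Real.sqrt (β * lam / (2 * (m : ℝ) ^ 2)) →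
        Psi τ γ U V Wstar + lam * norm02 Wstar ≤ Psi τ γ U V W + lam * norm02 W) ∧
    (∀ W : Matrix (Fin m) (Fin n) ℝ,
      frobNorm (W - Wstar) < Real.sqrt (β * lam / (2 * (m : ℝ) ^ 2)) → W ≠ Wstar →
        Psi τ γ U V Wstar + lam * norm02 Wstar < Psi τ γ U V W + lam * norm02 W) := by
  constructor
  · intro W hW
    have h := core_ineq p m n τ γ lam β hτ hγ hlam hβ U V Wstar hP W hW
    have h2 : 0 ≤ (γ / 2) * frobSq (W - Wstar) :=
      mul_nonneg (by positivity) (frobSq_nonneg _)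
    linarith
  · intro W hW hne
    have h := core_ineq p m n τ γ lam β hτ hγ hlam hβ U V Wstar hP W hW
    have hpos : 0 < frobSq (W - Wstar) := frobSq_pos _ (sub_ne_zero.2 hne)
    have h2 : 0 < (γ / 2) * frobSq (W - Wstar) := mul_pos (by positivity) hpos
    linarith
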